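/- Let n ≥ 2, let d ≥ 1, and let e : Fin n → EuclideanSpace ℝ (Fin d) be a list of n edge vectors with ∑ j, e j = 0 (a closed polygon). For a permutation σ of Fin n define the n vertices v_0 = 0 and v_m = ∑_{j=0}^{m-1} e(σ j) for 1 ≤ m ≤ n−1, and define Gyradius(σ) = (1/(2n²)) · ∑_{i=0}^{n-1} ∑_{j=0}^{n-1} ‖v_i − v_j‖². Then the average over all n! permutations satisfies (1/n!) · ∑_{σ ∈ Perm(Fin n)} Gyradius(σ) = ((n+1)/(12n)) · ∑ j, ‖e j‖². -/

import Mathlib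

open Finset

private lemma comm3 {M : Type*} [AddCommMonoid M] {α β γ : Type*} [Fintype α] [Fintype β]
    [Fintype γ] (f : α → β → γ → M) :
    ∑ a, ∑ b, ∑ c, f a b c = ∑ b, ∑ c, ∑ a, f a b c := by
  rw [Finset.sum_comm]
  exact Finset.sum_congr rfl fun b _ => Finset.sum_comm

private lemma aux_norm_sq {n : ℕ} {E : Type*} [NormedAddCommGroup E]
    [InnerProductSpace ℝ E] (c : Fin n → ℝ) (x : Fin n → E) :
    ‖∑ m, c m • x m‖ ^ 2 = ∑ m, ∑ m', c m * c m' * (inner ℝ (x m) (x m') : ℝ) := by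
  rw [← real_inner_self_eq_norm_sq, sum_inner]
  refine Finset.sum_congr rfl fun m _ => ?_
  rw [inner_sum]
  refine Finset.sum_congr rfl fun m' _ => ?_
  rw [real_inner_smul_left, real_inner_smul_right]; ring

private lemma aux_cc {n : ℕ} (c : Fin n → ℝ) (T : Fin n → Fin n → ℝ) (t0 t1 : ℝ)
    (hT : ∀ m m', T m m' = if m = m' then t0 else t1) :
    ∑ m, ∑ m', c m * c m' * T m m'
      = t1 * (∑ m, c m) ^ 2 + (t0 - t1) * ∑ m, c m ^ 2 := by
  have h : ∀ m m' : Fin n, c m * c m' * T m m'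
      = c m * c m' * t1 + (if m = m' then c m' ^ 2 * (t0 - t1) else 0) := by
    intro m m'; rw [hT]; split_ifs with hmm
    · subst hmm; ring
    · ring
  simp_rw [h, Finset.sum_add_distrib, Finset.sum_ite_eq, Finset.mem_univ, if_pos]
  congr 1
  · rw [sq, Finset.sum_mul_sum, Finset.mul_sum]
    refine Finset.sum_congr rfl fun m _ => ?_
    rw [Finset.mul_sum]
    exact Finset.sum_congr rfl fun m' _ => by ring
  · rw [Finset.mul_sum]
    exact Finset.sum_congr rfl fun m _ => by ring

private lemma aux_pair {n : ℕ} (f : Fin n → ℝ) :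
    ∑ i : Fin n, ∑ j : Fin n, (f i - f j) ^ 2
      = 2 * (n : ℝ) * (∑ i, f i ^ 2) - 2 * (∑ i, f i) ^ 2 := by
  have h : ∀ i j : Fin n, (f i - f j) ^ 2 = f i ^ 2 + f j ^ 2 - 2 * (f i * f j) := by
    intro i j; ring
  have hinner : ∀ i : Fin n, ∑ j : Fin n, (f i ^ 2 + f j ^ 2 - 2 * (f i * f j))
      = (n : ℝ) * f i ^ 2 + (∑ j, f j ^ 2) - 2 * (f i * ∑ j, f j) := by
    intro i
    rw [Finset.sum_sub_distrib, Finset.sum_add_distrib, Finset.sum_const, Finset.card_univ,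
      Fintype.card_fin, nsmul_eq_mul, ← Finset.mul_sum, ← Finset.mul_sum]
  simp_rw [h, hinner]
  rw [Finset.sum_sub_distrib, Finset.sum_add_distrib, Finset.sum_const, Finset.card_univ,
    Fintype.card_fin, nsmul_eq_mul, ← Finset.mul_sum, ← Finset.mul_sum, ← Finset.sum_mul]
  ring

private lemma count_lt (n k : ℕ) (h : k ≤ n) :
    ∑ x ∈ range n, (if x < k then (1:ℝ) else 0) = k := by
  induction n with
  | zero => have : k = 0 := by omega
            subst this; simp
  | succ n ih =>
    rw [Finset.sum_range_succ]
    by_cases hk : k ≤ n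
    · rw [ih hk, if_neg (by omega)]; ring
    · have hk' : k = n + 1 := by omega
      subst hk'
      rw [if_pos (by omega)]
      rw [Finset.sum_congr rfl fun x hx => if_pos (Nat.lt_succ_of_lt (Finset.mem_range.mp hx))]
      rw [Finset.sum_const, Finset.card_range, nsmul_eq_mul, mul_one]
      push_cast; ring

private lemma count_gt (n k : ℕ) (h : k < n) :
    ∑ x ∈ range n, (if k < x then (1:ℝ) else 0) = (n : ℝ) - k - 1 := by
  have hpt : ∀ x, (if k < x then (1:ℝ) else 0) = 1 - (if x < k + 1 then (1:ℝ) else 0) := by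
    intro x; by_cases hx : k < x
    · rw [if_pos hx, if_neg (by omega)]; ring
    · rw [if_neg hx, if_pos (by omega)]; ring
  simp_rw [hpt]
  rw [Finset.sum_sub_distrib, count_lt n (k+1) (by omega), Finset.sum_const, Finset.card_range,
    nsmul_eq_mul, mul_one]
  push_cast; ring

private lemma sum_id' (n : ℕ) : ∑ x ∈ range n, (x : ℝ) = n * (n - 1) / 2 := by
  induction n with
  | zero => simp
  | succ n ih => rw [Finset.sum_range_succ, ih]; push_cast; ring

private lemma sum_sq' (n : ℕ) : ∑ x ∈ range n, (x : ℝ) ^ 2 = n * (n - 1) * (2 * n - 1) / 6 := by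
  induction n with
  | zero => simp
  | succ n ih => rw [Finset.sum_range_succ, ih]; push_cast; ring

/-- The average over all rearrangements of the edges of a closed polygon of the radius of
gyration (with `n` vertices given by partial sums starting at the origin):
`sGyradius(𝒫) = ((n+1)/(12n)) · ∑‖eⱼ‖²`. -/
theorem sGyradius_closed_formula (n d : ℕ) (hn : 2 ≤ n) (hd : 1 ≤ d)
    (e : Fin n → EuclideanSpace ℝ (Fin d)) (hclosed : ∑ j, e j = 0) :
    (1 / (n.factorial : ℝ)) *
        ∑ σ : Equiv.Perm (Fin n),
          (1 / (2 * (n : ℝ) ^ 2)) *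
            ∑ i : Fin n, ∑ j : Fin n,
              ‖(∑ m : Fin n, if (m : ℕ) < (i : ℕ) then e (σ m) else 0)
                - (∑ m : Fin n, if (m : ℕ) < (j : ℕ) then e (σ m) else 0)‖ ^ 2
      = (((n : ℝ) + 1) / (12 * (n : ℝ))) * ∑ j, ‖e j‖ ^ 2 := by
  classical
  set Q : ℝ := ∑ j, ‖e j‖ ^ 2 with hQdef
  set T : Fin n → Fin n → ℝ :=
    fun m m' => ∑ σ : Equiv.Perm (Fin n), (inner ℝ (e (σ m)) (e (σ m')) : ℝ) with hTdef
  have hperm : ∀ (π : Equiv.Perm (Fin n)) (f : Equiv.Perm (Fin n) → ℝ),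
      ∑ σ : Equiv.Perm (Fin n), f (σ * π) = ∑ σ : Equiv.Perm (Fin n), f σ := by
    intro π f
    simpa using Equiv.sum_comp (Equiv.mulRight π) f
  set m0 : Fin n := ⟨0, by omega⟩ with hm0
  set m1 : Fin n := ⟨1, by omega⟩ with hm1
  have hm01 : m0 ≠ m1 := by simp [hm0, hm1, Fin.ext_iff]
  set t0 : ℝ := T m0 m0 with ht0def
  set t1 : ℝ := T m0 m1 with ht1def
  have hT : ∀ m m' : Fin n, T m m' = if m = m' then t0 else t1 := by
    intro m m'
    by_cases h : m = m'
    · subst h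
      rw [if_pos rfl, ht0def]
      have := hperm (Equiv.swap m0 m) (fun σ => (inner ℝ (e (σ m0)) (e (σ m0)) : ℝ))
      simp only [Equiv.Perm.mul_apply, Equiv.swap_apply_left] at this
      simp only [hTdef]
      exact this
    · rw [if_neg h, ht1def]
      set π1 : Equiv.Perm (Fin n) := Equiv.swap m0 m with hπ1
      have hne2 : m0 ≠ π1 m' := by
        intro hEq
        apply h
        have h1 : π1 m0 = m := Equiv.swap_apply_left m0 m
        have h2 : π1 (π1 m') = m' := Equiv.swap_apply_self m0 m m'
        rw [← h1, hEq, h2]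
      set π : Equiv.Perm (Fin n) := π1 * Equiv.swap m1 (π1 m') with hπ
      have hp0 : π m0 = m := by
        rw [hπ, Equiv.Perm.mul_apply, Equiv.swap_apply_of_ne_of_ne hm01 hne2, hπ1,
          Equiv.swap_apply_left]
      have hp1 : π m1 = m' := by
        rw [hπ, Equiv.Perm.mul_apply, Equiv.swap_apply_left, hπ1, Equiv.swap_apply_self]
      have := hperm π (fun σ => (inner ℝ (e (σ m0)) (e (σ m1)) : ℝ))
      simp only [Equiv.Perm.mul_apply, hp0, hp1] at this
      simp only [hTdef]
      exact this
  have hfact : ∑ σ : Equiv.Perm (Fin n), (1:ℝ) = (n.factorial : ℝ) := by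
    rw [Finset.sum_const, Finset.card_univ, Fintype.card_perm, Fintype.card_fin, nsmul_eq_mul,
      mul_one]
  have hstep : ∀ σ : Equiv.Perm (Fin n), ∑ m : Fin n, (inner ℝ (e (σ m)) (e (σ m)) : ℝ) = Q := by
    intro σ
    rw [hQdef, ← Equiv.sum_comp σ (fun a => ‖e a‖ ^ 2)]
    exact Finset.sum_congr rfl fun m _ => real_inner_self_eq_norm_sq _
  have hdiagsum : (n : ℝ) * t0 = (n.factorial : ℝ) * Q := by
    have h1 : ∑ m : Fin n, T m m = (n.factorial : ℝ) * Q := by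
      simp only [hTdef]
      rw [Finset.sum_comm]
      rw [Finset.sum_congr rfl fun σ _ => hstep σ, Finset.sum_const, Finset.card_univ,
        Fintype.card_perm, Fintype.card_fin, nsmul_eq_mul]
    have h2 : ∑ m : Fin n, T m m = (n : ℝ) * t0 := by
      rw [Finset.sum_congr rfl fun m _ => by rw [hT m m, if_pos rfl]]
      rw [Finset.sum_const, Finset.card_univ, Fintype.card_fin, nsmul_eq_mul]
    rw [← h2, h1]
  have hzero : ∑ m : Fin n, ∑ m' : Fin n, T m m' = 0 := by
    simp only [hTdef]
    rw [← comm3 (fun (σ : Equiv.Perm (Fin n)) (m m' : Fin n) =>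
      (inner ℝ (e (σ m)) (e (σ m')) : ℝ))]
    refine Finset.sum_eq_zero fun σ _ => ?_
    have hc : ∑ m : Fin n, e (σ m) = 0 := by rw [Equiv.sum_comp σ e, hclosed]
    have expand : ∑ m : Fin n, ∑ m' : Fin n, (inner ℝ (e (σ m)) (e (σ m')) : ℝ)
        = (inner ℝ (∑ m : Fin n, e (σ m)) (∑ m' : Fin n, e (σ m')) : ℝ) := by
      rw [sum_inner]
      exact Finset.sum_congr rfl fun m _ => (inner_sum _ _ _).symm
    rw [expand, hc, inner_zero_left]
  have hoffsum : ((n : ℝ) ^ 2 - n) * t1 = -((n.factorial : ℝ) * Q) := by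
    have h3 : ∑ m : Fin n, ∑ m' : Fin n, T m m' = (n : ℝ) * t0 + ((n : ℝ) ^ 2 - n) * t1 := by
      have hrow : ∀ m : Fin n, ∑ m' : Fin n, T m m' = t0 + ((n : ℝ) - 1) * t1 := by
        intro m
        have hpt : ∀ m' : Fin n, T m m' = t1 + (if m = m' then t0 - t1 else 0) := by
          intro m'; rw [hT m m']; split_ifs <;> ring
        rw [Finset.sum_congr rfl fun m' _ => hpt m']
        rw [Finset.sum_add_distrib, Finset.sum_ite_eq, if_pos (Finset.mem_univ m),
          Finset.sum_const, Finset.card_univ, Fintype.card_fin, nsmul_eq_mul]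
        ring
      rw [Finset.sum_congr rfl fun m _ => hrow m, Finset.sum_const, Finset.card_univ,
        Fintype.card_fin, nsmul_eq_mul]
      ring
    rw [hzero] at h3
    rw [← hdiagsum]
    linarith
  set c : Fin n → Fin n → Fin n → ℝ := fun i j m =>
    (if (m : ℕ) < (i : ℕ) then (1:ℝ) else 0) - (if (m : ℕ) < (j : ℕ) then (1:ℝ) else 0)
    with hcdef
  have hsplit : ∀ (σ : Equiv.Perm (Fin n)) (i j : Fin n),
      ‖(∑ m : Fin n, if (m : ℕ) < (i : ℕ) then e (σ m) else 0)
          - (∑ m : Fin n, if (m : ℕ) < (j : ℕ) then e (σ m) else 0)‖ ^ 2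
        = ∑ m : Fin n, ∑ m' : Fin n,
            c i j m * c i j m' * (inner ℝ (e (σ m)) (e (σ m')) : ℝ) := by
    intro σ i j
    rw [← Finset.sum_sub_distrib]
    have hterm : ∀ m : Fin n,
        (if (m : ℕ) < (i : ℕ) then e (σ m) else 0)
          - (if (m : ℕ) < (j : ℕ) then e (σ m) else 0) = c i j m • e (σ m) := by
      intro m; simp only [hcdef]; split_ifs <;> simp
    rw [Finset.sum_congr rfl fun m _ => hterm m, aux_norm_sq]
  have hC : ∀ i : Fin n, ∑ m : Fin n, (if (m : ℕ) < (i : ℕ) then (1:ℝ) else 0) = ((i : ℕ) : ℝ) := by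
    intro i
    rw [Fin.sum_univ_eq_sum_range (fun x => if x < (i : ℕ) then (1:ℝ) else 0) n]
    exact count_lt n i i.isLt.le
  have hD : ∀ m : Fin n, ∑ i : Fin n, (if (m : ℕ) < (i : ℕ) then (1:ℝ) else 0)
      = (n : ℝ) - ((m : ℕ) : ℝ) - 1 := by
    intro m
    rw [Fin.sum_univ_eq_sum_range (fun x => if (m : ℕ) < x then (1:ℝ) else 0) n]
    exact count_gt n m m.isLt
  have hcsum : ∀ i j : Fin n, ∑ m : Fin n, c i j m = ((i : ℕ) : ℝ) - ((j : ℕ) : ℝ) := by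
    intro i j
    simp only [hcdef]
    rw [Finset.sum_sub_distrib, hC i, hC j]
  have hS2 : ∑ i : Fin n, ∑ j : Fin n, (((i : ℕ) : ℝ) - ((j : ℕ) : ℝ)) ^ 2
      = (n : ℝ) ^ 2 * ((n : ℝ) ^ 2 - 1) / 6 := by
    rw [aux_pair (fun i : Fin n => ((i : ℕ) : ℝ))]
    rw [Fin.sum_univ_eq_sum_range (fun x => (x : ℝ) ^ 2) n,
      Fin.sum_univ_eq_sum_range (fun x => (x : ℝ)) n, sum_sq', sum_id']
    ring
  have hS1 : ∑ i : Fin n, ∑ j : Fin n, ∑ m : Fin n, (c i j m) ^ 2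
      = (n : ℝ) * ((n : ℝ) ^ 2 - 1) / 3 := by
    rw [← comm3 (fun (m i j : Fin n) => (c i j m) ^ 2)]
    have hm : ∀ m : Fin n, ∑ i : Fin n, ∑ j : Fin n, (c i j m) ^ 2
        = 2 * (n : ℝ) * ((n : ℝ) - ((m : ℕ) : ℝ) - 1)
          - 2 * ((n : ℝ) - ((m : ℕ) : ℝ) - 1) ^ 2 := by
      intro m
      have h1 : ∑ i : Fin n, ∑ j : Fin n, (c i j m) ^ 2
          = ∑ i : Fin n, ∑ j : Fin n,
              ((fun i : Fin n => if (m : ℕ) < (i : ℕ) then (1:ℝ) else 0) i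
                - (fun i : Fin n => if (m : ℕ) < (i : ℕ) then (1:ℝ) else 0) j) ^ 2 := by
        simp only [hcdef]
      rw [h1, aux_pair]
      have hsqid : ∑ i : Fin n,
          ((fun i : Fin n => if (m : ℕ) < (i : ℕ) then (1:ℝ) else 0) i) ^ 2
          = ∑ i : Fin n, (if (m : ℕ) < (i : ℕ) then (1:ℝ) else 0) := by
        refine Finset.sum_congr rfl fun i _ => ?_
        by_cases h : (m : ℕ) < (i : ℕ)
        · simp [h]
        · simp [h]
      rw [hsqid, hD m]
    rw [Finset.sum_congr rfl fun m _ => hm m]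
    have expand : ∀ m : Fin n,
        2 * (n : ℝ) * ((n : ℝ) - ((m : ℕ) : ℝ) - 1) - 2 * ((n : ℝ) - ((m : ℕ) : ℝ) - 1) ^ 2
        = (2 * (n : ℝ) - 2) + (2 * (n : ℝ) - 4) * ((m : ℕ) : ℝ) - 2 * ((m : ℕ) : ℝ) ^ 2 :=
      fun m => by ring
    rw [Finset.sum_congr rfl fun m _ => expand m]
    rw [Finset.sum_sub_distrib, Finset.sum_add_distrib, Finset.sum_const, Finset.card_univ,
      Fintype.card_fin, nsmul_eq_mul, ← Finset.mul_sum, ← Finset.mul_sum]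
    rw [Fin.sum_univ_eq_sum_range (fun x => (x : ℝ)) n,
      Fin.sum_univ_eq_sum_range (fun x => (x : ℝ) ^ 2) n, sum_id', sum_sq']
    ring
  have hmain : ∑ σ : Equiv.Perm (Fin n), ∑ i : Fin n, ∑ j : Fin n,
      ‖(∑ m : Fin n, if (m : ℕ) < (i : ℕ) then e (σ m) else 0)
        - (∑ m : Fin n, if (m : ℕ) < (j : ℕ) then e (σ m) else 0)‖ ^ 2
      = t1 * ((n : ℝ) ^ 2 * ((n : ℝ) ^ 2 - 1) / 6)
        + (t0 - t1) * ((n : ℝ) * ((n : ℝ) ^ 2 - 1) / 3) := by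
    rw [Finset.sum_congr rfl fun σ _ => Finset.sum_congr rfl fun i _ =>
      Finset.sum_congr rfl fun j _ => hsplit σ i j]
    rw [comm3 (fun (σ : Equiv.Perm (Fin n)) (i j : Fin n) => ∑ m : Fin n, ∑ m' : Fin n,
      c i j m * c i j m' * (inner ℝ (e (σ m)) (e (σ m')) : ℝ))]
    have hij : ∀ i j : Fin n, ∑ σ : Equiv.Perm (Fin n), ∑ m : Fin n, ∑ m' : Fin n,
        c i j m * c i j m' * (inner ℝ (e (σ m)) (e (σ m')) : ℝ)
        = t1 * (((i : ℕ) : ℝ) - ((j : ℕ) : ℝ)) ^ 2 + (t0 - t1) * ∑ m : Fin n, (c i j m) ^ 2 := by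
      intro i j
      rw [comm3 (fun (σ : Equiv.Perm (Fin n)) (m m' : Fin n) =>
        c i j m * c i j m' * (inner ℝ (e (σ m)) (e (σ m')) : ℝ))]
      have hpull : ∀ m m' : Fin n, ∑ σ : Equiv.Perm (Fin n),
          c i j m * c i j m' * (inner ℝ (e (σ m)) (e (σ m')) : ℝ)
          = c i j m * c i j m' * T m m' := by
        intro m m'
        rw [← Finset.mul_sum]
      rw [Finset.sum_congr rfl fun m _ => Finset.sum_congr rfl fun m' _ => hpull m m']
      rw [aux_cc (c i j) T t0 t1 hT, hcsum i j]
    rw [Finset.sum_congr rfl fun i _ => Finset.sum_congr rfl fun j _ => hij i j]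
    simp_rw [Finset.sum_add_distrib, ← Finset.mul_sum]
    rw [hS2, hS1]
  rw [← Finset.mul_sum, hmain]
  have hne : (n : ℝ) ≠ 0 := by positivity
  have hne1 : (n : ℝ) - 1 ≠ 0 := by
    have : (2 : ℝ) ≤ (n : ℝ) := by exact_mod_cast hn
    nlinarith
  have hfne : (n.factorial : ℝ) ≠ 0 := by
    exact_mod_cast Nat.factorial_ne_zero n
  have hnn : (n : ℝ) ^ 2 - (n : ℝ) ≠ 0 := by
    have : (n : ℝ) ^ 2 - (n : ℝ) = (n : ℝ) * ((n : ℝ) - 1) := by ring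
    rw [this]
    exact mul_ne_zero hne hne1
  have ht0v : t0 = (n.factorial : ℝ) * Q / (n : ℝ) := by
    rw [eq_div_iff hne]; linarith [hdiagsum]
  have ht1v : t1 = -((n.factorial : ℝ) * Q) / ((n : ℝ) ^ 2 - (n : ℝ)) := by
    rw [eq_div_iff hnn]; linarith [hoffsum]
  rw [ht0v, ht1v]
  field_simp
  ring
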